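/- arXiv:1907.01799 — 10 statements merged into one kernel-verified Lean document; each statement's English description precedes it below -/
import Mathlib

section
/- Let μ, ν ∈ ℕ be positive with T := lcm(μ, ν). Then there exists a unique matrix M ∈ ℝ^{2×2} (the T-step solution operator Ψ(T,0)) such that every solution (x, y) of the (μ,ν)-asynchronous system satisfies (x(t+T), y(t+T))ᵀ = M·(x(t), y(t))ᵀ for all t ∈ 𝕋_T = {nT : n ∈ ℕ}; consequently, every solution satisfies (x(kT), y(kT))ᵀ = M^k·(x(0), y(0))ᵀ for all k ∈ ℕ. -/
/-- `(x, y)` is a solution of the `(μ,ν)`-asynchronous system, where `x n` stands for the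
value at time `n·μ ∈ 𝕋_μ` and `y n` for the value at time `n·ν ∈ 𝕋_ν`. -/
def IsAsyncSol (μ ν α β γ δ : ℝ) (x y : ℕ → ℝ) : Prop :=
  (∀ n : ℕ, x (n + 1) = (1 + μ * α) * x n + μ * β * y ⌊(n : ℝ) * μ / ν⌋₊) ∧
  (∀ n : ℕ, y (n + 1) = ν * γ * x ⌊(n : ℝ) * ν / μ⌋₊ + (1 + ν * δ) * y n)

/-- `M` is the `T`-step solution operator (`T = lcm(μ,ν)`): every solution satisfies
`(x(t+T), y(t+T))ᵀ = M (x(t), y(t))ᵀ` for all `t ∈ 𝕋_T`. At time `t = mT`, `x` has index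
`m·(T/μ)` and `y` has index `m·(T/ν)`. -/
def IsTStepOp (μ ν : ℕ) (α β γ δ : ℝ) (M : Matrix (Fin 2) (Fin 2) ℝ) : Prop :=
  ∀ x y : ℕ → ℝ, IsAsyncSol (μ : ℝ) (ν : ℝ) α β γ δ x y →
    ∀ m : ℕ,
      ![x ((m + 1) * (Nat.lcm μ ν / μ)), y ((m + 1) * (Nat.lcm μ ν / ν))] =
        M.mulVec ![x (m * (Nat.lcm μ ν / μ)), y (m * (Nat.lcm μ ν / ν))]


lemma flcast (n a b : ℕ) : ⌊(n : ℝ) * a / b⌋₊ = n * a / b := by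
  rw [show ((n : ℝ) * a) = ((n * a : ℕ) : ℝ) by push_cast; ring, Nat.floor_div_natCast,
    Nat.floor_natCast]

def asol (μ ν : ℕ) (hμ : 0 < μ) (hν : 0 < ν) (α β γ δ x0 y0 : ℝ) : Bool → ℕ → ℝ
  | true, 0 => x0
  | false, 0 => y0
  | true, n+1 => (1 + μ*α) * asol μ ν hμ hν α β γ δ x0 y0 true n
      + μ*β * asol μ ν hμ hν α β γ δ x0 y0 false (n*μ/ν)
  | false, n+1 => ν*γ * asol μ ν hμ hν α β γ δ x0 y0 true (n*ν/μ)
      + (1+ν*δ) * asol μ ν hμ hν α β γ δ x0 y0 false n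
termination_by b n => n * (cond b μ ν)
decreasing_by
  · simp only [cond]; exact Nat.mul_lt_mul_of_lt_of_le (Nat.lt_succ_self n) le_rfl hμ
  · simp only [cond]
    calc (n*μ/ν) * ν ≤ n*μ := Nat.div_mul_le_self _ _
      _ < (n+1)*μ := Nat.mul_lt_mul_of_lt_of_le (Nat.lt_succ_self n) le_rfl hμ
  · simp only [cond]
    calc (n*ν/μ) * μ ≤ n*ν := Nat.div_mul_le_self _ _
      _ < (n+1)*ν := Nat.mul_lt_mul_of_lt_of_le (Nat.lt_succ_self n) le_rfl hν
  · simp only [cond]; exact Nat.mul_lt_mul_of_lt_of_le (Nat.lt_succ_self n) le_rfl hν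

lemma asol_isSol (μ ν : ℕ) (hμ : 0 < μ) (hν : 0 < ν) (α β γ δ x0 y0 : ℝ) :
    IsAsyncSol (μ : ℝ) (ν : ℝ) α β γ δ (asol μ ν hμ hν α β γ δ x0 y0 true)
      (asol μ ν hμ hν α β γ δ x0 y0 false) := by
  constructor
  · intro n; rw [flcast]; conv_lhs => rw [asol]
  · intro n; rw [flcast]; conv_lhs => rw [asol]

/-- Two solutions with the same initial values agree. -/
lemma sol_unique (μ ν : ℕ) (hμ : 0 < μ) (hν : 0 < ν) (α β γ δ : ℝ)
    (x y x' y' : ℕ → ℝ) (hs : IsAsyncSol (μ : ℝ) (ν : ℝ) α β γ δ x y)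
    (hs' : IsAsyncSol (μ : ℝ) (ν : ℝ) α β γ δ x' y')
    (h0 : x 0 = x' 0) (h0' : y 0 = y' 0) :
    (∀ n, x n = x' n) ∧ ∀ n, y n = y' n := by
  have key : ∀ t : ℕ, (∀ n, n * μ ≤ t → x n = x' n) ∧ (∀ n, n * ν ≤ t → y n = y' n) := by
    intro t
    induction t with
    | zero =>
      constructor
      · intro n hn
        have : n = 0 := by
          rcases Nat.eq_zero_of_le_zero hn with h; exact Nat.mul_eq_zero.mp h |>.elim
            (fun h => h) (fun h => absurd h hμ.ne')
        simpa [this] using h0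
      · intro n hn
        have : n = 0 := by
          rcases Nat.eq_zero_of_le_zero hn with h; exact Nat.mul_eq_zero.mp h |>.elim
            (fun h => h) (fun h => absurd h hν.ne')
        simpa [this] using h0'
    | succ t ih =>
      constructor
      · intro n hn
        match n with
        | 0 => exact h0
        | m + 1 =>
          have hmμ : m * μ ≤ t := by nlinarith [hμ]
          have hyidx : (m * μ / ν) * ν ≤ t := le_trans (Nat.div_mul_le_self _ _) hmμ
          rw [hs.1 m, hs'.1 m, flcast, ih.1 m hmμ, ih.2 _ hyidx]
      · intro n hn
        match n with
        | 0 => exact h0'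
        | m + 1 =>
          have hmν : m * ν ≤ t := by nlinarith [hν]
          have hxidx : (m * ν / μ) * μ ≤ t := le_trans (Nat.div_mul_le_self _ _) hmν
          rw [hs.2 m, hs'.2 m, flcast, ih.2 m hmν, ih.1 _ hxidx]
  exact ⟨fun n => (key (n * μ)).1 n le_rfl, fun n => (key (n * ν)).2 n le_rfl⟩

/-- Linear combinations of solutions are solutions. -/
lemma combo_isSol (μ ν : ℕ) (α β γ δ : ℝ) (a b : ℝ) (x y x' y' : ℕ → ℝ)
    (hs : IsAsyncSol (μ : ℝ) (ν : ℝ) α β γ δ x y)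
    (hs' : IsAsyncSol (μ : ℝ) (ν : ℝ) α β γ δ x' y') :
    IsAsyncSol (μ : ℝ) (ν : ℝ) α β γ δ (fun n => a * x n + b * x' n)
      (fun n => a * y n + b * y' n) := by
  constructor
  · intro n; simp only; rw [hs.1 n, hs'.1 n]; ring
  · intro n; simp only; rw [hs.2 n, hs'.2 n]; ring

/-- Shifting by multiples of the period gives a solution. -/
lemma shift_isSol (μ ν : ℕ) (hμ : 0 < μ) (hν : 0 < ν) (α β γ δ : ℝ) (x y : ℕ → ℝ)
    (hs : IsAsyncSol (μ : ℝ) (ν : ℝ) α β γ δ x y) (m : ℕ) :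
    IsAsyncSol (μ : ℝ) (ν : ℝ) α β γ δ (fun n => x (n + m * (Nat.lcm μ ν / μ)))
      (fun n => y (n + m * (Nat.lcm μ ν / ν))) := by
  set p := Nat.lcm μ ν / μ with hp
  set q := Nat.lcm μ ν / ν with hq
  have hpμ : p * μ = Nat.lcm μ ν := by
    rw [hp, Nat.div_mul_cancel (Nat.dvd_lcm_left μ ν)]
  have hqν : q * ν = Nat.lcm μ ν := by
    rw [hq, Nat.div_mul_cancel (Nat.dvd_lcm_right μ ν)]
  constructor
  · intro n
    simp only
    rw [show n + 1 + m * p = (n + m * p) + 1 by omega, hs.1 (n + m * p), flcast, flcast]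
    congr 2
    rw [show (n + m * p) * μ = n * μ + (m * q) * ν by
      rw [add_mul, mul_assoc, hpμ, mul_assoc, hqν]]
    rw [Nat.add_mul_div_right _ _ hν]
  · intro n
    simp only
    rw [show n + 1 + m * q = (n + m * q) + 1 by omega, hs.2 (n + m * q), flcast, flcast]
    congr 3
    rw [show (n + m * q) * ν = n * ν + (m * p) * μ by
      rw [add_mul, mul_assoc, hqν, mul_assoc, hpμ]]
    rw [Nat.add_mul_div_right _ _ hμ]

theorem stmt3 (μ ν : ℕ) (hμ : 0 < μ) (hν : 0 < ν) (α β γ δ : ℝ) :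
    ∃! M : Matrix (Fin 2) (Fin 2) ℝ,
      IsTStepOp μ ν α β γ δ M ∧
      ∀ x y : ℕ → ℝ, IsAsyncSol (μ : ℝ) (ν : ℝ) α β γ δ x y →
        ∀ k : ℕ,
          ![x (k * (Nat.lcm μ ν / μ)), y (k * (Nat.lcm μ ν / ν))] =
            (M ^ k).mulVec ![x 0, y 0] := by
  set p := Nat.lcm μ ν / μ with hp
  set q := Nat.lcm μ ν / ν with hq
  set X1 := asol μ ν hμ hν α β γ δ 1 0 true with hX1
  set Y1 := asol μ ν hμ hν α β γ δ 1 0 false with hY1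
  set X2 := asol μ ν hμ hν α β γ δ 0 1 true with hX2
  set Y2 := asol μ ν hμ hν α β γ δ 0 1 false with hY2
  have hs1 : IsAsyncSol (μ : ℝ) (ν : ℝ) α β γ δ X1 Y1 := asol_isSol ..
  have hs2 : IsAsyncSol (μ : ℝ) (ν : ℝ) α β γ δ X2 Y2 := asol_isSol ..
  have hX10 : X1 0 = 1 := by rw [hX1, asol]
  have hY10 : Y1 0 = 0 := by rw [hY1, asol]
  have hX20 : X2 0 = 0 := by rw [hX2, asol]
  have hY20 : Y2 0 = 1 := by rw [hY2, asol]
  set M : Matrix (Fin 2) (Fin 2) ℝ := !![X1 p, X2 p; Y1 q, Y2 q] with hM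
  -- decomposition of an arbitrary solution
  have decomp : ∀ x y : ℕ → ℝ, IsAsyncSol (μ : ℝ) (ν : ℝ) α β γ δ x y →
      (∀ n, x n = x 0 * X1 n + y 0 * X2 n) ∧ (∀ n, y n = x 0 * Y1 n + y 0 * Y2 n) := by
    intro x y hs
    have hc := combo_isSol μ ν α β γ δ (x 0) (y 0) X1 Y1 X2 Y2 hs1 hs2
    exact sol_unique μ ν hμ hν α β γ δ x y _ _ hs hc
      (by simp [hX10, hX20]) (by simp [hY10, hY20])
  have mulVec_eval : ∀ (N : Matrix (Fin 2) (Fin 2) ℝ) (a b : ℝ),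
      N.mulVec ![a, b] = ![N 0 0 * a + N 0 1 * b, N 1 0 * a + N 1 1 * b] := by
    intro N a b
    funext i
    fin_cases i <;>
      simp [Matrix.mulVec, dotProduct, Fin.sum_univ_two]
  have hstep : IsTStepOp μ ν α β γ δ M := by
    intro x y hs m
    have hshift := shift_isSol μ ν hμ hν α β γ δ x y hs m
    have hd := decomp _ _ hshift
    have hx := hd.1 p
    have hy := hd.2 q
    simp only [zero_add] at hx hy
    rw [← hp, ← hq] at hx hy
    rw [mulVec_eval]
    have e1 : (m + 1) * p = p + m * p := by ring
    have e2 : (m + 1) * q = q + m * q := by ring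
    rw [e1, e2]
    funext i
    fin_cases i
    · simpa [hM, mul_comm] using hx
    · simpa [hM, mul_comm] using hy
  have hpow : ∀ x y : ℕ → ℝ, IsAsyncSol (μ : ℝ) (ν : ℝ) α β γ δ x y →
      ∀ k : ℕ, ![x (k * p), y (k * q)] = (M ^ k).mulVec ![x 0, y 0] := by
    intro x y hs k
    induction k with
    | zero => simp
    | succ k ih =>
      have := hstep x y hs k
      rw [this, ih, Matrix.mulVec_mulVec, ← pow_succ']
  refine ⟨M, ⟨hstep, hpow⟩, ?_⟩
  intro N ⟨_, hN⟩
  have a1 := hN X1 Y1 hs1 1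
  have a2 := hpow X1 Y1 hs1 1
  have b1 := hN X2 Y2 hs2 1
  have b2 := hpow X2 Y2 hs2 1
  rw [pow_one] at a1 a2 b1 b2
  have col0 : N.mulVec ![X1 0, Y1 0] = M.mulVec ![X1 0, Y1 0] := a1.symm.trans a2
  have col1 : N.mulVec ![X2 0, Y2 0] = M.mulVec ![X2 0, Y2 0] := b1.symm.trans b2
  rw [hX10, hY10] at col0
  rw [hX20, hY20] at col1
  ext i j
  fin_cases j
  · have h := congrFun col0 i
    rw [mulVec_eval, mulVec_eval] at h
    fin_cases i <;> simpa using h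
  · have h := congrFun col1 i
    rw [mulVec_eval, mulVec_eval] at h
    fin_cases i <;> simpa using h
end

section
/- Let μ = 1 and ν = 2 and let α, β, γ, δ be real parameters. Then every solution (x, y) of the (1,2)-asynchronous system satisfies, for all t ∈ 𝕋_2 = {0, 2, 4, ...}, the two-step recurrence (x(t+2), y(t+2))ᵀ = Ψ·(x(t), y(t))ᵀ, where Ψ is the matrix with rows ((1+α)², (1+α)β + β) and (2γ, 1+2δ). -/
/-- For `μ = 1`, `ν = 2`: at `t = 2m ∈ 𝕋_2`, `x` has index `2m` and `y` has index `m`. -/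
theorem stmt4 (α β γ δ : ℝ) (x y : ℕ → ℝ) (h : IsAsyncSol 1 2 α β γ δ x y) :
    ∀ m : ℕ,
      ![x (2 * (m + 1)), y (m + 1)] =
        (!![(1 + α) ^ 2, (1 + α) * β + β; 2 * γ, 1 + 2 * δ]).mulVec ![x (2 * m), y m] := by
  obtain ⟨hx, hy⟩ := h
  intro m
  have f1 : (⌊((2 * m : ℕ) : ℝ) * 1 / 2⌋₊ : ℕ) = m := by
    push_cast; rw [mul_one, mul_comm, mul_div_assoc]; norm_num
  have f2 : (⌊((2 * m + 1 : ℕ) : ℝ) * 1 / 2⌋₊ : ℕ) = m := by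
    push_cast
    rw [mul_one, show ((2:ℝ)) = ((2:ℕ):ℝ) by norm_num, Nat.floor_div_natCast]
    rw [show ((2:ℕ):ℝ) * (m:ℝ) + 1 = ((2*m+1:ℕ):ℝ) by push_cast; ring, Nat.floor_natCast]
    omega
  have f3 : (⌊((m : ℕ) : ℝ) * 2 / 1⌋₊ : ℕ) = 2 * m := by
    push_cast; rw [div_one, mul_comm]; exact_mod_cast Nat.floor_natCast _
  have h1 := hx (2 * m)
  have h2 := hx (2 * m + 1)
  have h3 := hy m
  rw [f1] at h1
  rw [f2] at h2
  rw [f3] at h3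
  funext i
  fin_cases i <;>
    simp [Matrix.mulVec, Matrix.vecHead, Matrix.vecTail, show 2*(m+1) = (2*m+1)+1 by ring,
      h1, h2, h3, Matrix.cons_dotProduct] <;> ring
end

section
/- Let μ ∈ ℕ be positive and ν = 1. Then every solution (x, y) of the (μ,1)-asynchronous system satisfies, for all t ∈ 𝕋_μ, the μ-step recurrence (x(t+μ), y(t+μ))ᵀ = Ψ^{μ,1}·(x(t), y(t))ᵀ, where Ψ^{μ,1} is the matrix with rows (1+μα, μβ) and (γ·Σ_{i=0}^{μ-1}(1+δ)^i, (1+δ)^μ). -/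
/-- For the `(μ,1)`-system: at `t = nμ ∈ 𝕋_μ`, `x` has index `n` and `y` has index `nμ`. -/
theorem stmt7 (μ : ℕ) (hμ : 0 < μ) (α β γ δ : ℝ)
    (x y : ℕ → ℝ) (hxy : IsAsyncSol (μ : ℝ) 1 α β γ δ x y) :
    ∀ n : ℕ,
      ![x (n + 1), y ((n + 1) * μ)] =
        (!![1 + (μ : ℝ) * α, (μ : ℝ) * β;
            γ * ∑ i ∈ Finset.range μ, (1 + δ) ^ i, (1 + δ) ^ μ]).mulVec
          ![x n, y (n * μ)] := by
  obtain ⟨hx, hy⟩ := hxy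
  intro n
  have key : ∀ k : ℕ, k ≤ μ →
      y (n * μ + k) = γ * (∑ i ∈ Finset.range k, (1 + δ) ^ i) * x n
        + (1 + δ) ^ k * y (n * μ) := by
    intro k
    induction k with
    | zero => intro _; simp
    | succ k ih =>
      intro hk
      have hk' : k < μ := hk
      have hfl : ⌊((n * μ + k : ℕ) : ℝ) * 1 / (μ : ℝ)⌋₊ = n := by
        rw [mul_one, Nat.floor_div_natCast, Nat.floor_natCast, mul_comm n μ,
          Nat.mul_add_div hμ, Nat.div_eq_of_lt hk', add_zero]
      have := hy (n * μ + k)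
      rw [hfl] at this
      have h2 := ih (le_of_lt hk')
      rw [show n * μ + (k + 1) = n * μ + k + 1 by ring, this, h2,
        geom_sum_succ, pow_succ]
      ring
  have hyμ := key μ le_rfl
  have hx' := hx n
  have hfl2 : ⌊(n : ℝ) * (μ : ℝ) / 1⌋₊ = n * μ := by
    rw [div_one, ← Nat.cast_mul, Nat.floor_natCast]
  rw [hfl2] at hx'
  funext i
  fin_cases i <;>
    simp [Matrix.mulVec, dotProduct, Matrix.cons_val_zero, Matrix.cons_val_one]
  · rw [hx']
  · rw [show (n + 1) * μ = n * μ + μ by ring, hyμ]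
end

section
/- Let μ ∈ ℕ be positive and ν = 1, and let (x, y) be a solution of the (μ,1)-asynchronous system. Then for every n ∈ ℕ and every m ∈ {0, 1, ..., μ-1}: x is constant on the block {nμ, nμ+1, ..., nμ+μ-1} (i.e. x(t^{*μ}) = x(nμ) for t in this block), and y(nμ+m) = γ·(Σ_{i=0}^{m-1}(1+δ)^i)·x(nμ) + (1+δ)^m·y(nμ). -/
lemma floor_aux (μ n m : ℕ) (hμ : 0 < μ) (hm : m < μ) :
    ⌊((n * μ + m : ℕ) : ℝ) * 1 / (μ : ℝ)⌋₊ = n := by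
  rw [mul_one, Nat.floor_div_natCast, Nat.floor_natCast, Nat.mul_comm n μ,
    Nat.mul_add_div hμ, Nat.div_eq_of_lt hm, Nat.add_zero]

/-- For a solution of the `(μ,1)`-system: on the block `{nμ, …, nμ+μ-1}` the sampled value
of `x` is `x(nμ)` (i.e. `x(t^{*μ}) = x(nμ)`, the sample index `⌊(nμ+m)·1/μ⌋` being `n`),
and `y(nμ+m) = γ·(Σ_{i<m}(1+δ)^i)·x(nμ) + (1+δ)^m·y(nμ)`. -/
theorem stmt8 (μ : ℕ) (hμ : 0 < μ) (α β γ δ : ℝ)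
    (x y : ℕ → ℝ) (hxy : IsAsyncSol (μ : ℝ) 1 α β γ δ x y) :
    ∀ n : ℕ, ∀ m < μ,
      x ⌊((n * μ + m : ℕ) : ℝ) * 1 / (μ : ℝ)⌋₊ = x n ∧
      y (n * μ + m) =
        γ * (∑ i ∈ Finset.range m, (1 + δ) ^ i) * x n + (1 + δ) ^ m * y (n * μ) := by
  intro n m hm
  constructor
  · rw [floor_aux μ n m hμ hm]
  · induction m with
    | zero => simp
    | succ k ih =>
      have hk : k < μ := Nat.lt_of_succ_lt hm
      have hrec := hxy.2 (n * μ + k)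
      have hf : ⌊((n * μ + k : ℕ) : ℝ) * 1 / (μ : ℝ)⌋₊ = n := floor_aux μ n k hμ hk
      rw [← Nat.add_assoc, hrec, hf, ih hk, geom_sum_succ]
      ring
end

section
/- Let μ ∈ ℕ be positive and ν = 1, and let Ψ^{μ,1} be the 2×2 matrix with rows (1+μα, μβ) and (γ·Σ_{i=0}^{μ-1}(1+δ)^i, (1+δ)^μ). If every complex eigenvalue of Ψ^{μ,1} has modulus strictly less than 1, then the origin is globally asymptotically stable: every solution (x, y) of the (μ,1)-asynchronous system satisfies x(nμ) → 0 as n → ∞ and y(n) → 0 as n → ∞. -/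
open Filter

attribute [local instance] Matrix.linftyOpNormedRing Matrix.linftyOpNormedAlgebra

/-- In a complex Banach algebra, if every spectral value has norm `< 1`, then `‖a ^ n‖ → 0`. -/
lemma aux_pow_norm_tendsto_zero {A : Type*} [NormedRing A] [NormedAlgebra ℂ A] [CompleteSpace A]
    [Nontrivial A] (a : A) (h : ∀ z ∈ spectrum ℂ a, ‖z‖₊ < 1) :
    Tendsto (fun n : ℕ => ‖a ^ n‖) atTop (nhds 0) := by
  have hr : spectralRadius ℂ a < 1 := by
    simpa using spectrum.spectralRadius_lt_of_forall_lt a (r := 1) h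
  obtain ⟨c, hc1, hc2⟩ := ENNReal.lt_iff_exists_nnreal_btwn.mp hr
  have hgel := spectrum.pow_nnnorm_pow_one_div_tendsto_nhds_spectralRadius a
  have hev : ∀ᶠ n : ℕ in atTop, ((‖a ^ n‖₊ : ENNReal) ^ (1 / (n:ℝ))) < c :=
    hgel.eventually_lt_const hc1
  have hc2' : (c : ℝ) < 1 := by exact_mod_cast hc2
  refine squeeze_zero' ?_ ?_ (tendsto_pow_atTop_nhds_zero_of_lt_one c.coe_nonneg hc2')
  · exact Filter.Eventually.of_forall fun n => norm_nonneg _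
  · filter_upwards [hev, eventually_ge_atTop 1] with n hn hn1
    have hn0 : (n : ℝ) ≠ 0 := by positivity
    have h2 : (‖a ^ n‖₊ : ENNReal) < (c : ENNReal) ^ (n : ℝ) := by
      have := ENNReal.rpow_lt_rpow hn (by positivity : (0:ℝ) < n)
      rwa [← ENNReal.rpow_mul, one_div, inv_mul_cancel₀ hn0, ENNReal.rpow_one] at this
    rw [ENNReal.rpow_natCast, ← ENNReal.coe_pow, ENNReal.coe_lt_coe] at h2
    have : ‖a ^ n‖ < ((c ^ n : NNReal) : ℝ) := h2
    simpa using this.le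

/-- An entry of a matrix is bounded by the `L∞`-operator norm. -/
lemma aux_entry_le_linfty {n : Type*} [Fintype n] [DecidableEq n]
    (M : Matrix n n ℂ) (i j : n) : ‖M i j‖ ≤ ‖M‖ := by
  have h1 : ‖M i j‖₊ ≤ ‖M‖₊ := by
    rw [Matrix.linfty_opNNNorm_def]
    refine le_trans ?_ (Finset.le_sup (Finset.mem_univ i))
    exact Finset.single_le_sum (f := fun k => ‖M i k‖₊) (fun k _ => zero_le)
      (Finset.mem_univ j)
  exact_mod_cast h1

theorem stmt9 (μ : ℕ) (hμ : 0 < μ) (α β γ δ : ℝ)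
    (hspec : ∀ z ∈ spectrum ℂ
        ((!![1 + (μ : ℝ) * α, (μ : ℝ) * β;
             γ * ∑ i ∈ Finset.range μ, (1 + δ) ^ i, (1 + δ) ^ μ]).map Complex.ofReal),
      ‖z‖ < 1)
    (x y : ℕ → ℝ) (hxy : IsAsyncSol (μ : ℝ) 1 α β γ δ x y) :
    Filter.Tendsto x Filter.atTop (nhds 0) ∧ Filter.Tendsto y Filter.atTop (nhds 0) := by
  obtain ⟨hx, hy⟩ := hxy
  -- clean up the recurrences
  have hx' : ∀ n : ℕ, x (n + 1) = (1 + μ * α) * x n + μ * β * y (n * μ) := by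
    intro n
    have hfl : ⌊(n : ℝ) * (μ:ℝ)⌋₊ = n * μ := by
      exact_mod_cast Nat.floor_natCast (n * μ)
    simpa [hfl] using hx n
  have hy' : ∀ n : ℕ, y (n + 1) = γ * x (n / μ) + (1 + δ) * y n := by
    intro n
    have hfl : ⌊(n : ℝ) / (μ:ℝ)⌋₊ = n / μ := by
      rw [Nat.floor_div_natCast, Nat.floor_natCast]
    simpa [hfl] using hy n
  -- key formula for y within one macro-step
  have key : ∀ n : ℕ, ∀ i : ℕ, i ≤ μ →
      y (n * μ + i) = (1 + δ) ^ i * y (n * μ) +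
        γ * (∑ j ∈ Finset.range i, (1 + δ) ^ j) * x n := by
    intro n i
    induction i with
    | zero => intro _; simp
    | succ i ih =>
      intro hi
      have hi' : i ≤ μ := Nat.le_of_succ_le hi
      have hilt : i < μ := hi
      have hdiv : (n * μ + i) / μ = n := by
        rw [mul_comm n μ, Nat.mul_add_div hμ, Nat.div_eq_of_lt hilt, add_zero]
      have h1 : y (n * μ + i + 1) = γ * x n + (1 + δ) * y (n * μ + i) := by
        rw [hy' (n * μ + i), hdiv]
      rw [show n * μ + (i + 1) = n * μ + i + 1 from rfl, h1, ih hi', geom_sum_succ]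
      ring
  -- the one-step matrix
  set S : ℝ := ∑ i ∈ Finset.range μ, (1 + δ) ^ i with hS
  set Ψ : Matrix (Fin 2) (Fin 2) ℝ :=
    !![1 + (μ : ℝ) * α, (μ : ℝ) * β; γ * S, (1 + δ) ^ μ] with hΨ
  set v : ℕ → Fin 2 → ℝ := fun n => ![x n, y (n * μ)] with hv
  have hstep : ∀ n : ℕ, v (n + 1) = Ψ.mulVec (v n) := by
    intro n
    funext i
    fin_cases i
    · simpa [hv, hΨ, Matrix.mulVec, dotProduct, Fin.sum_univ_two] using hx' n
    · have h2 : y ((n + 1) * μ) = γ * S * x n + (1 + δ) ^ μ * y (n * μ) := by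
        have hk := key n μ le_rfl
        rw [show (n + 1) * μ = n * μ + μ by ring, hk]
        ring
      simpa [hv, hΨ, Matrix.mulVec, dotProduct, Fin.sum_univ_two] using h2
  have hvn : ∀ n : ℕ, v n = (Ψ ^ n).mulVec (v 0) := by
    intro n
    induction n with
    | zero => simp [Matrix.one_mulVec]
    | succ n ih =>
      rw [hstep n, ih, Matrix.mulVec_mulVec, ← pow_succ']
  -- entries of Ψ ^ n tend to 0
  have hE : ∀ i j : Fin 2, Tendsto (fun n : ℕ => (Ψ ^ n) i j) atTop (nhds 0) := by
    have hnorm := aux_pow_norm_tendsto_zero (Ψ.map Complex.ofReal) ?_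
    · intro i j
      have hmap : ∀ n : ℕ, (Ψ.map Complex.ofReal) ^ n = (Ψ ^ n).map Complex.ofReal := by
        intro n
        have := map_pow (Complex.ofRealHom.mapMatrix) Ψ n
        simp only [RingHom.mapMatrix_apply] at this
        exact this.symm
      refine squeeze_zero_norm (fun n => ?_) hnorm
      have h3 : |(Ψ ^ n) i j| ≤ ‖(Ψ ^ n).map Complex.ofReal‖ := by
        simpa [Matrix.map_apply, Complex.norm_real] using
          aux_entry_le_linfty ((Ψ ^ n).map Complex.ofReal) i j
      rwa [← hmap n] at h3
    · intro z hz
      have h1 : ‖z‖ < 1 := hspec z hz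
      rw [← NNReal.coe_lt_coe]
      simpa using h1
  -- x and y (n μ) tend to zero
  have hx0 : ∀ n : ℕ, x n = (Ψ ^ n) 0 0 * x 0 + (Ψ ^ n) 0 1 * y 0 := by
    intro n
    have := congrFun (hvn n) 0
    simpa [hv, Matrix.mulVec, dotProduct, Fin.sum_univ_two] using this
  have hY0 : ∀ n : ℕ, y (n * μ) = (Ψ ^ n) 1 0 * x 0 + (Ψ ^ n) 1 1 * y 0 := by
    intro n
    have := congrFun (hvn n) 1
    simpa [hv, Matrix.mulVec, dotProduct, Fin.sum_univ_two] using this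
  have hxlim : Tendsto x atTop (nhds 0) := by
    have : Tendsto (fun n : ℕ => (Ψ ^ n) 0 0 * x 0 + (Ψ ^ n) 0 1 * y 0) atTop (nhds 0) := by
      simpa using (((hE 0 0).mul_const (x 0)).add ((hE 0 1).mul_const (y 0)))
    exact this.congr fun n => (hx0 n).symm
  have hYlim : Tendsto (fun n : ℕ => y (n * μ)) atTop (nhds 0) := by
    have : Tendsto (fun n : ℕ => (Ψ ^ n) 1 0 * x 0 + (Ψ ^ n) 1 1 * y 0) atTop (nhds 0) := by
      simpa using (((hE 1 0).mul_const (x 0)).add ((hE 1 1).mul_const (y 0)))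
    exact this.congr fun n => (hY0 n).symm
  refine ⟨hxlim, ?_⟩
  -- now transfer to all of y
  have hq : Tendsto (fun m : ℕ => m / μ) atTop atTop := by
    refine tendsto_atTop_atTop.mpr fun b => ⟨b * μ, fun m hm => ?_⟩
    exact (Nat.le_div_iff_mul_le hμ).mpr hm
  set B : ℝ := (1 + |1 + δ|) ^ μ with hB
  have hBpos : 0 < B := by positivity
  have hpow : ∀ i : ℕ, i ≤ μ → |(1 + δ) ^ i| ≤ B := by
    intro i hi
    rw [abs_pow]
    calc |1 + δ| ^ i ≤ (1 + |1 + δ|) ^ i :=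
          pow_le_pow_left₀ (abs_nonneg _) (by linarith [abs_nonneg (1 + δ)]) i
      _ ≤ (1 + |1 + δ|) ^ μ :=
          pow_le_pow_right₀ (by linarith [abs_nonneg (1 + δ)]) hi
  have hSb : ∀ i : ℕ, i ≤ μ → |∑ j ∈ Finset.range i, (1 + δ) ^ j| ≤ μ * B := by
    intro i hi
    calc |∑ j ∈ Finset.range i, (1 + δ) ^ j| ≤ ∑ j ∈ Finset.range i, |(1 + δ) ^ j| :=
          Finset.abs_sum_le_sum_abs _ _
      _ ≤ ∑ _j ∈ Finset.range i, B := by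
          refine Finset.sum_le_sum fun j hj => hpow j ?_
          exact le_trans (Finset.mem_range.mp hj).le hi
      _ = i * B := by simp [mul_comm]
      _ ≤ μ * B := by
          have : (i : ℝ) ≤ μ := by exact_mod_cast hi
          nlinarith
  have bound : ∀ m : ℕ, |y m| ≤ B * |y (m / μ * μ)| + (|γ| * (μ * B)) * |x (m / μ)| := by
    intro m
    have hmod : m % μ ≤ μ := (Nat.mod_lt m hμ).le
    have hm : m / μ * μ + m % μ = m := Nat.div_add_mod' m μ
    have hk := key (m / μ) (m % μ) hmod
    rw [hm] at hk
    rw [hk]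
    calc |(1 + δ) ^ (m % μ) * y (m / μ * μ) + γ * (∑ j ∈ Finset.range (m % μ), (1 + δ) ^ j) * x (m / μ)|
        ≤ |(1 + δ) ^ (m % μ)| * |y (m / μ * μ)| +
          |γ| * |∑ j ∈ Finset.range (m % μ), (1 + δ) ^ j| * |x (m / μ)| := by
          refine le_trans (abs_add_le _ _) ?_
          rw [abs_mul, abs_mul, abs_mul]
      _ ≤ B * |y (m / μ * μ)| + (|γ| * (μ * B)) * |x (m / μ)| := by
          gcongr
          · exact hpow _ hmod
          · exact hSb _ hmod
  have hg : Tendsto (fun m : ℕ => B * |y (m / μ * μ)| + (|γ| * (μ * B)) * |x (m / μ)|)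
      atTop (nhds 0) := by
    have h1 : Tendsto (fun m : ℕ => y (m / μ * μ)) atTop (nhds 0) := hYlim.comp hq
    have h2 : Tendsto (fun m : ℕ => x (m / μ)) atTop (nhds 0) := hxlim.comp hq
    simpa using ((h1.abs.const_mul B).add (h2.abs.const_mul (|γ| * (μ * B))))
  refine squeeze_zero_norm (fun m => ?_) hg
  simpa [Real.norm_eq_abs] using bound m
end

section
/- Consider the parameters α = -1/16, β = 1/8, γ = -1/8, δ = -1/16 and μ = 7. The synchronous 7-step matrix Ψ^{7,7} with rows (9/16, 7/8) and (-7/8, 9/16) has every complex eigenvalue of modulus strictly greater than 1 (so the origin of the (7,7)-synchronous system is not asymptotically stable), while the asynchronous 7-step matrix Ψ^{7,1} with rows (9/16, 7/8) and (-97576081/134217728, 170859375/268435456) has every complex eigenvalue of modulus strictly less than 1 (so the origin of the (7,1)-asynchronous system is asymptotically stable). -/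
lemma quad_abs_sq (t d : ℝ) (hd : t ^ 2 ≤ 4 * d) (z : ℂ)
    (h : z ^ 2 - (t : ℂ) * z + (d : ℂ) = 0) : ‖z‖ ^ 2 = d := by
  set w : ℝ := Real.sqrt (d - (t / 2) ^ 2) with hw
  have hw2 : w ^ 2 = d - (t / 2) ^ 2 := by
    rw [hw, Real.sq_sqrt]; nlinarith
  have hdC : ((w : ℂ)) ^ 2 = (d : ℂ) - ((t : ℂ) / 2) ^ 2 := by
    have := congrArg (Complex.ofReal) hw2
    push_cast at this
    exact this
  have hfac : (z - ((t : ℂ) / 2 + (w : ℂ) * Complex.I)) *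
      (z - ((t : ℂ) / 2 - (w : ℂ) * Complex.I)) = 0 := by
    linear_combination h - (w : ℂ) ^ 2 * Complex.I_sq + hdC
  rcases mul_eq_zero.mp hfac with h1 | h1
  · have hz : z = (t : ℂ) / 2 + (w : ℂ) * Complex.I := sub_eq_zero.mp h1
    rw [Complex.sq_norm, hz, Complex.normSq_apply]
    simp
    nlinarith [hw2]
  · have hz : z = (t : ℂ) / 2 - (w : ℂ) * Complex.I := sub_eq_zero.mp h1
    rw [Complex.sq_norm, hz, Complex.normSq_apply]
    simp
    nlinarith [hw2]

lemma spec_quad (a b c d : ℂ) (z : ℂ) (h : z ∈ spectrum ℂ !![a,b;c,d]) :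
    z ^ 2 - (a + d) * z + (a * d - b * c) = 0 := by
  rw [spectrum.mem_iff] at h
  rw [Matrix.isUnit_iff_isUnit_det, isUnit_iff_ne_zero, not_ne_iff] at h
  have : ((algebraMap ℂ (Matrix (Fin 2) (Fin 2) ℂ)) z - !![a,b;c,d]).det
      = z ^ 2 - (a + d) * z + (a * d - b * c) := by
    rw [Matrix.algebraMap_eq_diagonal, Matrix.det_fin_two]
    simp [Matrix.diagonal]
    ring
  rw [this] at h
  exact h

/-- Parameters `α = -1/16`, `β = 1/8`, `γ = -1/8`, `δ = -1/16`, `μ = 7`: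
the synchronous matrix `Ψ^{7,7} = I + 7P` has all eigenvalues of modulus `> 1`,
while the asynchronous matrix `Ψ^{7,1}` has all eigenvalues of modulus `< 1`. -/
theorem stmt10 :
    (!![1 + 7 * (-1/16 : ℝ), 7 * (1/8); 7 * (-1/8), 1 + 7 * (-1/16)] =
        !![(9 : ℝ)/16, 7/8; -7/8, 9/16]) ∧
    (∀ z ∈ spectrum ℂ ((!![(9 : ℝ)/16, 7/8; -7/8, 9/16]).map Complex.ofReal),
      1 < ‖z‖) ∧
    (!![1 + 7 * (-1/16 : ℝ), 7 * (1/8);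
        (-1/8) * ∑ i ∈ Finset.range 7, (1 + (-1/16 : ℝ)) ^ i, (1 + (-1/16 : ℝ)) ^ 7] =
        !![(9 : ℝ)/16, 7/8; -97576081/134217728, 170859375/268435456]) ∧
    (∀ z ∈ spectrum ℂ
        ((!![(9 : ℝ)/16, 7/8; -97576081/134217728, 170859375/268435456]).map Complex.ofReal),
      ‖z‖ < 1) := by
  refine ⟨by norm_num [Matrix.ext_iff.symm], ?_, by norm_num [Finset.sum_range_succ, Matrix.ext_iff.symm], ?_⟩
  · intro z hz
    have hmap : (!![(9 : ℝ)/16, 7/8; -7/8, 9/16]).map Complex.ofReal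
        = !![((9:ℝ)/16 : ℂ), ((7:ℝ)/8 : ℂ); ((-7:ℝ)/8 : ℂ), ((9:ℝ)/16 : ℂ)] := by
      ext i j; fin_cases i <;> fin_cases j <;> simp
    rw [hmap] at hz
    have hq := spec_quad _ _ _ _ z hz
    have hq' : z ^ 2 - ((9/8 : ℝ) : ℂ) * z + (((277:ℝ)/256 : ℝ) : ℂ) = 0 := by
      push_cast at hq ⊢
      linear_combination hq
    have habs := quad_abs_sq (9/8) (277/256) (by norm_num) z hq'
    nlinarith [norm_nonneg z]
  · intro z hz
    have hmap : (!![(9 : ℝ)/16, 7/8; -97576081/134217728, 170859375/268435456]).map Complex.ofReal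
        = !![(((9:ℝ)/16 : ℝ) : ℂ), (((7:ℝ)/8 : ℝ) : ℂ);
             (((-97576081:ℝ)/134217728 : ℝ) : ℂ), (((170859375:ℝ)/268435456 : ℝ) : ℂ)] := by
      ext i j; fin_cases i <;> fin_cases j <;> simp
    rw [hmap] at hz
    have hq := spec_quad _ _ _ _ z hz
    have hq' : z ^ 2 - (((321854319:ℝ)/268435456 : ℝ) : ℂ) * z
        + (((4269864643:ℝ)/4294967296 : ℝ) : ℂ) = 0 := by
      push_cast at hq ⊢
      linear_combination hq
    have habs := quad_abs_sq (321854319/268435456) (4269864643/4294967296) (by norm_num) z hq'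
    nlinarith [norm_nonneg z]
end

section
/- The 2×2 real matrix with rows (-17, -2) and (1089/8, 16) has -1/2 as its only complex eigenvalue (a double eigenvalue, of modulus < 1), whereas the 2×2 real matrix with rows (-8, -1) and (1089/40, 4) has the complex eigenvalue (-40 - 3√390)/20, whose modulus is strictly greater than 1; hence a one-step matrix can be unstable while the associated two-step matrix is Schur stable. -/
lemma mem_spec_iff (M : Matrix (Fin 2) (Fin 2) ℂ) (z : ℂ) :
    z ∈ spectrum ℂ M ↔ (algebraMap ℂ (Matrix (Fin 2) (Fin 2) ℂ) z - M).det = 0 := by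
  rw [spectrum.mem_iff, Matrix.isUnit_iff_isUnit_det, isUnit_iff_ne_zero, not_not]

/-- The two-step matrix `Ψ^{2,1}(2,0)` has `-1/2` as its only (double) eigenvalue, of
modulus `< 1` (Schur stable), while the one-step matrix `Ψ^{1,1}(1,0) = P` has the
eigenvalue `(-40 - 3√390)/20` of modulus `> 1` (unstable). -/
theorem stmt12 :
    spectrum ℂ ((!![(-17 : ℝ), -2; 1089/8, 16]).map Complex.ofReal) = {(-1/2 : ℂ)} ∧
    (∀ z ∈ spectrum ℂ ((!![(-17 : ℝ), -2; 1089/8, 16]).map Complex.ofReal),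
      ‖z‖ < 1) ∧
    (((-40 - 3 * Real.sqrt 390) / 20 : ℝ) : ℂ) ∈
      spectrum ℂ ((!![(-8 : ℝ), -1; 1089/40, 4]).map Complex.ofReal) ∧
    1 < ‖(((-40 - 3 * Real.sqrt 390) / 20 : ℝ) : ℂ)‖ := by
  have hspec : spectrum ℂ ((!![(-17 : ℝ), -2; 1089/8, 16]).map Complex.ofReal)
      = {(-1/2 : ℂ)} := by
    ext z
    rw [mem_spec_iff]
    have hdet : (algebraMap ℂ (Matrix (Fin 2) (Fin 2) ℂ) z
        - (!![(-17 : ℝ), -2; 1089/8, 16]).map Complex.ofReal).det = (z + 1/2)^2 := by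
      norm_num [Matrix.det_fin_two, Matrix.algebraMap_matrix_apply]
      ring
    rw [hdet, Set.mem_singleton_iff, pow_eq_zero_iff (two_ne_zero)]
    constructor
    · intro h; linear_combination h
    · intro h; rw [h]; ring
  refine ⟨hspec, ?_, ?_, ?_⟩
  · intro z hz
    rw [hspec, Set.mem_singleton_iff] at hz
    rw [hz]
    norm_num [Complex.norm_def, Complex.normSq]
  · set x : ℝ := (-40 - 3 * Real.sqrt 390) / 20 with hx
    rw [mem_spec_iff]
    have hdet : (algebraMap ℂ (Matrix (Fin 2) (Fin 2) ℂ) (x : ℂ)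
        - (!![(-8 : ℝ), -1; 1089/40, 4]).map Complex.ofReal).det
        = (x : ℂ)^2 + 4 * (x : ℂ) - 191/40 := by
      norm_num [Matrix.det_fin_two, Matrix.algebraMap_matrix_apply]
      ring
    rw [hdet]
    have key : x ^ 2 + 4 * x - 191/40 = 0 := by
      have h390 : Real.sqrt 390 ^ 2 = 390 := Real.sq_sqrt (by norm_num)
      rw [hx]; nlinarith [h390]
    calc (x : ℂ)^2 + 4 * (x : ℂ) - 191/40
        = ((x ^ 2 + 4 * x - 191/40 : ℝ) : ℂ) := by push_cast; ring
      _ = 0 := by rw [key]; simp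
  · rw [Complex.norm_real, Real.norm_eq_abs]
    have h : (1:ℝ) ≤ Real.sqrt 390 := by
      rw [show (1:ℝ) = Real.sqrt 1 by simp]
      exact Real.sqrt_le_sqrt (by norm_num)
    rw [abs_of_neg (by nlinarith)]
    nlinarith
end

section
/- Let μ, ν ∈ ℕ be positive, let T := lcm(μ, ν), and let M ∈ ℝ^{2×2} be the T-step solution operator of the (μ,ν)-asynchronous system. If every complex eigenvalue of M has modulus strictly less than 1, then the origin is globally asymptotically stable: every solution (x, y) of the (μ,ν)-asynchronous system satisfies x(nμ) → 0 and y(nν) → 0 as n → ∞. -/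
open Filter

lemma pow_norm_tendsto_zero {A : Type*} [NormedRing A] [NormedAlgebra ℂ A]
    [CompleteSpace A] [Nontrivial A] (a : A)
    (h : ∀ z ∈ spectrum ℂ a, ‖z‖ < 1) :
    Tendsto (fun n : ℕ => ‖a ^ n‖) atTop (nhds 0) := by
  obtain ⟨z, hz, hzr⟩ := spectrum.exists_nnnorm_eq_spectralRadius a
  have hsr : spectralRadius ℂ a < 1 := by
    rw [← hzr]
    have := h z hz
    exact_mod_cast this
  obtain ⟨r, hr1, hr2⟩ := exists_between hsr
  have hrt : r ≠ ⊤ := (hr2.trans_le le_top).ne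
  have hgel := spectrum.pow_nnnorm_pow_one_div_tendsto_nhds_spectralRadius a
  have hev : ∀ᶠ n : ℕ in atTop, (‖a ^ n‖₊ : ENNReal) ^ (1 / (n : ℝ)) < r :=
    hgel.eventually_lt_const hr1
  rw [eventually_atTop] at hev
  obtain ⟨N, hN⟩ := hev
  have hbound : ∀ n ≥ max N 1, ‖a ^ n‖ ≤ r.toReal ^ n := by
    intro n hn
    have hn1 : 1 ≤ n := le_trans (le_max_right N 1) hn
    have hNn := hN n (le_trans (le_max_left N 1) hn)
    have hne : (n : ℝ) ≠ 0 := by positivity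
    have h1 : ((‖a ^ n‖₊ : ENNReal) ^ (1 / (n : ℝ))) ^ (n : ℝ) ≤ r ^ (n : ℝ) :=
      ENNReal.rpow_le_rpow hNn.le (by positivity)
    rw [← ENNReal.rpow_mul, one_div, inv_mul_cancel₀ hne, ENNReal.rpow_one,
      ENNReal.rpow_natCast] at h1
    have h2 := ENNReal.toReal_mono (ENNReal.pow_ne_top hrt) h1
    simpa [ENNReal.toReal_pow] using h2
  have hr01 : r.toReal < 1 := by
    rw [← ENNReal.toReal_one]
    exact ENNReal.toReal_strict_mono ENNReal.one_ne_top hr2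
  have hgeo : Tendsto (fun n : ℕ => r.toReal ^ n) atTop (nhds 0) :=
    tendsto_pow_atTop_nhds_zero_of_lt_one ENNReal.toReal_nonneg hr01
  refine squeeze_zero_norm' ?_ hgeo
  rw [eventually_atTop]
  exact ⟨max N 1, fun n hn => by simpa using hbound n hn⟩

lemma entry_norm_le (A : Matrix (Fin 2) (Fin 2) ℂ) (i j : Fin 2) :
    ‖A i j‖ ≤ ‖Matrix.toEuclideanCLM (𝕜 := ℂ) A‖ := by
  set f := Matrix.toEuclideanCLM (𝕜 := ℂ) A
  set v : EuclideanSpace ℂ (Fin 2) := EuclideanSpace.single j 1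
  have h1 : inner ℂ (EuclideanSpace.single i (1:ℂ)) (f v) = A i j := by
    rw [EuclideanSpace.inner_single_left]
    have := Matrix.ofLp_toEuclideanCLM (𝕜 := ℂ) A v
    have h2 : (f v) i = (A.mulVec (WithLp.ofLp v)) i := by
      rw [← this]
    have h3 : (WithLp.ofLp v : Fin 2 → ℂ) = Pi.single j 1 := rfl
    rw [h2, h3, Matrix.mulVec_single]
    simp
  calc ‖A i j‖ = ‖inner (𝕜 := ℂ) (EuclideanSpace.single i (1:ℂ)) (f v)‖ := by rw [h1]
    _ ≤ ‖EuclideanSpace.single i (1:ℂ)‖ * ‖f v‖ := norm_inner_le_norm _ _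
    _ ≤ 1 * (‖f‖ * ‖v‖) := by
        rw [EuclideanSpace.norm_single]
        simp only [norm_one, one_mul]
        exact f.le_opNorm v
    _ ≤ ‖f‖ := by rw [EuclideanSpace.norm_single]; simp
lemma pow_entry_tendsto (M : Matrix (Fin 2) (Fin 2) ℝ)
    (hspec : ∀ z ∈ spectrum ℂ (M.map Complex.ofReal), ‖z‖ < 1) (i j : Fin 2) :
    Tendsto (fun m : ℕ => (M ^ m) i j) atTop (nhds 0) := by
  set Mc := M.map Complex.ofReal with hMc
  set a := Matrix.toEuclideanCLM (𝕜 := ℂ) Mc with ha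
  have hs : ∀ z ∈ spectrum ℂ a, ‖z‖ < 1 := by
    intro z hz
    exact hspec z (by rwa [ha, AlgEquiv.spectrum_eq] at hz)
  have hnorm := pow_norm_tendsto_zero a hs
  have hmp : ∀ m : ℕ, (M ^ m).map Complex.ofReal = Mc ^ m := by
    intro m
    rw [hMc]
    exact map_pow (Complex.ofRealHom.mapMatrix) M m
  refine squeeze_zero_norm (fun m => ?_) hnorm
  have h1 : ‖(Mc ^ m) i j‖ ≤ ‖Matrix.toEuclideanCLM (𝕜 := ℂ) (Mc ^ m)‖ := entry_norm_le _ i j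
  rw [← hmp] at h1
  have h2 : ((M ^ m).map Complex.ofReal) i j = ((M ^ m) i j : ℂ) := rfl
  rw [h2, Complex.norm_real] at h1
  rw [hmp, map_pow] at h1
  exact h1

theorem stmt14 (μ ν : ℕ) (hμ : 0 < μ) (hν : 0 < ν) (α β γ δ : ℝ)
    (M : Matrix (Fin 2) (Fin 2) ℝ) (hM : IsTStepOp μ ν α β γ δ M)
    (hspec : ∀ z ∈ spectrum ℂ (M.map Complex.ofReal), ‖z‖ < 1)
    (x y : ℕ → ℝ) (hxy : IsAsyncSol (μ : ℝ) (ν : ℝ) α β γ δ x y) :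
    Filter.Tendsto x Filter.atTop (nhds 0) ∧ Filter.Tendsto y Filter.atTop (nhds 0) := by
  have hstep := hM x y hxy
  set T := Nat.lcm μ ν with hTdef
  set K := T / μ with hKdef
  set L := T / ν with hLdef
  have hT0 : 0 < T := Nat.pos_of_ne_zero (Nat.lcm_ne_zero hμ.ne' hν.ne')
  have hKμ : K * μ = T := Nat.div_mul_cancel (Nat.dvd_lcm_left μ ν)
  have hLν : L * ν = T := Nat.div_mul_cancel (Nat.dvd_lcm_right μ ν)
  have hK0 : 0 < K := by
    rcases Nat.eq_zero_or_pos K with h | h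
    · rw [h, zero_mul] at hKμ; omega
    · exact h
  have hL0 : 0 < L := by
    rcases Nat.eq_zero_or_pos L with h | h
    · rw [h, zero_mul] at hLν; omega
    · exact h
  -- index computations
  have hidx_x : ∀ m i : ℕ, ⌊((m * K + i : ℕ) : ℝ) * μ / ν⌋₊ = m * L + i * μ / ν := by
    intro m i
    have h1 : ((m * K + i : ℕ) : ℝ) * μ / ν = (((m * K + i) * μ : ℕ) : ℝ) / ((ν : ℕ) : ℝ) := by
      push_cast; ring
    rw [h1, Nat.floor_div_natCast, Nat.floor_natCast]
    have hKL : K * μ = L * ν := by rw [hKμ, hLν]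
    have h2 : (m * K + i) * μ = ν * (m * L) + i * μ := by
      rw [add_mul, mul_assoc, hKL]; ring
    rw [h2, Nat.mul_add_div hν]
  have hidx_y : ∀ m i : ℕ, ⌊((m * L + i : ℕ) : ℝ) * ν / μ⌋₊ = m * K + i * ν / μ := by
    intro m i
    have h1 : ((m * L + i : ℕ) : ℝ) * ν / μ = (((m * L + i) * ν : ℕ) : ℝ) / ((μ : ℕ) : ℝ) := by
      push_cast; ring
    rw [h1, Nat.floor_div_natCast, Nat.floor_natCast]
    have hKL : L * ν = K * μ := by rw [hKμ, hLν]
    have h2 : (m * L + i) * ν = μ * (m * K) + i * ν := by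
      rw [add_mul, mul_assoc, hKL]; ring
    rw [h2, Nat.mul_add_div hμ]
  have hx : ∀ m i : ℕ, x (m * K + i + 1)
      = (1 + (μ : ℝ) * α) * x (m * K + i) + (μ : ℝ) * β * y (m * L + i * μ / ν) := by
    intro m i
    have h := hxy.1 (m * K + i)
    rwa [hidx_x m i] at h
  have hy : ∀ m i : ℕ, y (m * L + i + 1)
      = (ν : ℝ) * γ * x (m * K + i * ν / μ) + (1 + (ν : ℝ) * δ) * y (m * L + i) := by
    intro m i
    have h := hxy.2 (m * L + i)
    rwa [hidx_y m i] at h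
  -- the T-step vector recursion
  set W : ℕ → ℝ := fun m => max |x (m * K)| |y (m * L)| with hWdef
  have hW0 : ∀ m, 0 ≤ W m := fun m => le_trans (abs_nonneg _) (le_max_left _ _)
  have hv : ∀ m : ℕ, ![x (m * K), y (m * L)] = (M ^ m).mulVec ![x 0, y 0] := by
    intro m
    induction m with
    | zero => simp [Matrix.one_mulVec]
    | succ m ih =>
      have h := hstep m
      rw [ih] at h
      rw [h, Matrix.mulVec_mulVec, ← pow_succ']
  have hWz : Filter.Tendsto W Filter.atTop (nhds 0) := by
    have hx0 : Filter.Tendsto (fun m => x (m * K)) Filter.atTop (nhds 0) := by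
      have hrepr : ∀ m : ℕ, x (m * K) = (M ^ m) 0 0 * x 0 + (M ^ m) 0 1 * y 0 := by
        intro m
        have := congrFun (hv m) 0
        simpa [Matrix.mulVec, dotProduct, Fin.sum_univ_two] using this
      simp only [hrepr]
      simpa using (((pow_entry_tendsto M hspec 0 0).mul_const (x 0)).add
        ((pow_entry_tendsto M hspec 0 1).mul_const (y 0)))
    have hy0 : Filter.Tendsto (fun m => y (m * L)) Filter.atTop (nhds 0) := by
      have hrepr : ∀ m : ℕ, y (m * L) = (M ^ m) 1 0 * x 0 + (M ^ m) 1 1 * y 0 := by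
        intro m
        have := congrFun (hv m) 1
        simpa [Matrix.mulVec, dotProduct, Fin.sum_univ_two] using this
      simp only [hrepr]
      simpa using (((pow_entry_tendsto M hspec 1 0).mul_const (x 0)).add
        ((pow_entry_tendsto M hspec 1 1).mul_const (y 0)))
    have := hx0.abs.max hy0.abs
    simpa using this
  -- the growth constant
  set a : ℝ := 1 + |1 + (μ : ℝ) * α| + |(μ : ℝ) * β| + |(ν : ℝ) * γ| + |1 + (ν : ℝ) * δ|
    with hadef
  have ha1 : 1 ≤ a := by
    have h1 : (0:ℝ) ≤ |1 + (μ : ℝ) * α| := abs_nonneg _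
    have h2 : (0:ℝ) ≤ |(μ : ℝ) * β| := abs_nonneg _
    have h3 : (0:ℝ) ≤ |(ν : ℝ) * γ| := abs_nonneg _
    have h4 : (0:ℝ) ≤ |1 + (ν : ℝ) * δ| := abs_nonneg _
    rw [hadef]; linarith
  have hax : |1 + (μ : ℝ) * α| + |(μ : ℝ) * β| ≤ a := by
    have h1 : (0:ℝ) ≤ |(ν : ℝ) * γ| := abs_nonneg _
    have h2 : (0:ℝ) ≤ |1 + (ν : ℝ) * δ| := abs_nonneg _
    rw [hadef]; linarith
  have hay : |(ν : ℝ) * γ| + |1 + (ν : ℝ) * δ| ≤ a := by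
    have h1 : (0:ℝ) ≤ |(μ : ℝ) * β| := abs_nonneg _
    have h2 : (0:ℝ) ≤ |1 + (μ : ℝ) * α| := abs_nonneg _
    rw [hadef]; linarith
  -- key induction on elapsed time
  have key : ∀ t m : ℕ,
      (∀ j, j ≤ K → j * μ ≤ t → |x (m * K + j)| ≤ a ^ (j * μ) * W m) ∧
      (∀ j, j ≤ L → j * ν ≤ t → |y (m * L + j)| ≤ a ^ (j * ν) * W m) := by
    intro t
    induction t using Nat.strong_induction_on with
    | _ t IH =>
      intro m
      constructor
      · intro j hjK hjt
        match j with
        | 0 =>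
          simp only [Nat.add_zero, Nat.zero_mul, pow_zero, one_mul]
          exact le_max_left _ _
        | (i + 1) =>
          have hsm : (i + 1) * μ = i * μ + μ := by ring
          have hiμ : i * μ < t := by rw [hsm] at hjt; omega
          have hIH := IH (i * μ) hiμ m
          have hxi := hIH.1 i (le_trans (Nat.le_succ i) hjK) le_rfl
          have hj' : i * μ / ν ≤ L := by
            have h1 : i * μ ≤ T := by
              calc i * μ ≤ K * μ := Nat.mul_le_mul_right μ (by omega)
                _ = T := hKμ
            calc i * μ / ν ≤ T / ν := Nat.div_le_div_right h1
              _ = L := rfl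
          have hyi := hIH.2 (i * μ / ν) hj' (Nat.div_mul_le_self _ _)
          have hya : |y (m * L + i * μ / ν)| ≤ a ^ (i * μ) * W m :=
            le_trans hyi (mul_le_mul_of_nonneg_right
              (pow_le_pow_right₀ ha1 (Nat.div_mul_le_self _ _)) (hW0 m))
          have hpW : 0 ≤ a ^ (i * μ) * W m :=
            mul_nonneg (pow_nonneg (by linarith) _) (hW0 m)
          calc |x (m * K + (i + 1))|
              = |(1 + (μ : ℝ) * α) * x (m * K + i) + (μ : ℝ) * β * y (m * L + i * μ / ν)| := by
                rw [show m * K + (i + 1) = m * K + i + 1 by ring, hx m i]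
            _ ≤ |1 + (μ : ℝ) * α| * |x (m * K + i)| + |(μ : ℝ) * β| * |y (m * L + i * μ / ν)| := by
                refine le_trans (abs_add_le _ _) ?_
                rw [abs_mul (1 + (μ : ℝ) * α), abs_mul ((μ : ℝ) * β)]
            _ ≤ |1 + (μ : ℝ) * α| * (a ^ (i * μ) * W m) + |(μ : ℝ) * β| * (a ^ (i * μ) * W m) :=
                add_le_add (mul_le_mul_of_nonneg_left hxi (abs_nonneg _))
                  (mul_le_mul_of_nonneg_left hya (abs_nonneg _))
            _ = (|1 + (μ : ℝ) * α| + |(μ : ℝ) * β|) * (a ^ (i * μ) * W m) := by ring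
            _ ≤ a * (a ^ (i * μ) * W m) := mul_le_mul_of_nonneg_right hax hpW
            _ = a ^ (i * μ + 1) * W m := by ring
            _ ≤ a ^ ((i + 1) * μ) * W m := mul_le_mul_of_nonneg_right
                (pow_le_pow_right₀ ha1 (by rw [hsm]; omega)) (hW0 m)
      · intro j hjL hjt
        match j with
        | 0 =>
          simp only [Nat.add_zero, Nat.zero_mul, pow_zero, one_mul]
          exact le_max_right _ _
        | (i + 1) =>
          have hsm : (i + 1) * ν = i * ν + ν := by ring
          have hiν : i * ν < t := by rw [hsm] at hjt; omega
          have hIH := IH (i * ν) hiν m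
          have hyi := hIH.2 i (le_trans (Nat.le_succ i) hjL) le_rfl
          have hj' : i * ν / μ ≤ K := by
            have h1 : i * ν ≤ T := by
              calc i * ν ≤ L * ν := Nat.mul_le_mul_right ν (by omega)
                _ = T := hLν
            calc i * ν / μ ≤ T / μ := Nat.div_le_div_right h1
              _ = K := rfl
          have hxi := hIH.1 (i * ν / μ) hj' (Nat.div_mul_le_self _ _)
          have hxa : |x (m * K + i * ν / μ)| ≤ a ^ (i * ν) * W m :=
            le_trans hxi (mul_le_mul_of_nonneg_right
              (pow_le_pow_right₀ ha1 (Nat.div_mul_le_self _ _)) (hW0 m))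
          have hpW : 0 ≤ a ^ (i * ν) * W m :=
            mul_nonneg (pow_nonneg (by linarith) _) (hW0 m)
          calc |y (m * L + (i + 1))|
              = |(ν : ℝ) * γ * x (m * K + i * ν / μ) + (1 + (ν : ℝ) * δ) * y (m * L + i)| := by
                rw [show m * L + (i + 1) = m * L + i + 1 by ring, hy m i]
            _ ≤ |(ν : ℝ) * γ| * |x (m * K + i * ν / μ)| + |1 + (ν : ℝ) * δ| * |y (m * L + i)| := by
                refine le_trans (abs_add_le _ _) ?_
                rw [abs_mul ((ν : ℝ) * γ), abs_mul (1 + (ν : ℝ) * δ)]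
            _ ≤ |(ν : ℝ) * γ| * (a ^ (i * ν) * W m) + |1 + (ν : ℝ) * δ| * (a ^ (i * ν) * W m) :=
                add_le_add (mul_le_mul_of_nonneg_left hxa (abs_nonneg _))
                  (mul_le_mul_of_nonneg_left hyi (abs_nonneg _))
            _ = (|(ν : ℝ) * γ| + |1 + (ν : ℝ) * δ|) * (a ^ (i * ν) * W m) := by ring
            _ ≤ a * (a ^ (i * ν) * W m) := mul_le_mul_of_nonneg_right hay hpW
            _ = a ^ (i * ν + 1) * W m := by ring
            _ ≤ a ^ ((i + 1) * ν) * W m := mul_le_mul_of_nonneg_right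
                (pow_le_pow_right₀ ha1 (by rw [hsm]; omega)) (hW0 m)
  -- conclude
  have hdivK : Filter.Tendsto (fun n : ℕ => n / K) Filter.atTop Filter.atTop :=
    Filter.tendsto_atTop_atTop.mpr fun b => ⟨b * K, fun n hn => (Nat.le_div_iff_mul_le hK0).mpr hn⟩
  have hdivL : Filter.Tendsto (fun n : ℕ => n / L) Filter.atTop Filter.atTop :=
    Filter.tendsto_atTop_atTop.mpr fun b => ⟨b * L, fun n hn => (Nat.le_div_iff_mul_le hL0).mpr hn⟩
  have hlimK : Filter.Tendsto (fun n : ℕ => a ^ T * W (n / K)) Filter.atTop (nhds 0) := by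
    simpa using (hWz.comp hdivK).const_mul (a ^ T)
  have hlimL : Filter.Tendsto (fun n : ℕ => a ^ T * W (n / L)) Filter.atTop (nhds 0) := by
    simpa using (hWz.comp hdivL).const_mul (a ^ T)
  constructor
  · refine squeeze_zero_norm (fun n => ?_) hlimK
    have hmod := Nat.div_add_mod n K
    have hjK : n % K ≤ K := (Nat.mod_lt n hK0).le
    have hjt : (n % K) * μ ≤ T := by
      calc (n % K) * μ ≤ K * μ := Nat.mul_le_mul_right μ hjK
        _ = T := hKμ
    have hb := (key T (n / K)).1 (n % K) hjK hjt
    rw [show n / K * K + n % K = n by rw [mul_comm]; exact hmod] at hb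
    calc ‖x n‖ = |x n| := rfl
      _ ≤ a ^ ((n % K) * μ) * W (n / K) := hb
      _ ≤ a ^ T * W (n / K) :=
          mul_le_mul_of_nonneg_right (pow_le_pow_right₀ ha1 hjt) (hW0 _)
  · refine squeeze_zero_norm (fun n => ?_) hlimL
    have hmod := Nat.div_add_mod n L
    have hjL : n % L ≤ L := (Nat.mod_lt n hL0).le
    have hjt : (n % L) * ν ≤ T := by
      calc (n % L) * ν ≤ L * ν := Nat.mul_le_mul_right ν hjL
        _ = T := hLν
    have hb := (key T (n / L)).2 (n % L) hjL hjt
    rw [show n / L * L + n % L = n by rw [mul_comm]; exact hmod] at hb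
    calc ‖y n‖ = |y n| := rfl
      _ ≤ a ^ ((n % L) * ν) * W (n / L) := hb
      _ ≤ a ^ T * W (n / L) :=
          mul_le_mul_of_nonneg_right (pow_le_pow_right₀ ha1 hjt) (hW0 _)
end

section
/- Let μ = 2 and ν = 3 and let α, β, γ, δ be real parameters. Then every solution (x, y) of the (2,3)-asynchronous system satisfies, for all t ∈ 𝕋_6 = {0, 6, 12, ...}, the six-step recurrence (x(t+6), y(t+6))ᵀ = Ψ·(x(t), y(t))ᵀ, where Ψ is the matrix with rows ((2α+1)³ + 6βγ, (2α+1)(2(2α+1)β + 2β) + 2β(3δ+1)) and (3(2α+1)γ + 3(3δ+1)γ, (3δ+1)² + 6βγ). -/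
lemma floor_aux_s15 (a b n : ℕ) : ⌊(n : ℝ) * a / b⌋₊ = n * a / b := by
  rw [show ((n:ℝ) * a : ℝ) = ((n * a : ℕ) : ℝ) by push_cast; ring,
      show ((b:ℕ):ℝ) = ((b:ℕ):ℝ) from rfl]
  rw [show ((b : ℝ)) = ((b : ℕ) : ℝ) by norm_num, Nat.floor_div_natCast, Nat.floor_natCast]

/-- For `μ = 2`, `ν = 3`: at `t = 6m ∈ 𝕋_6`, `x` has index `3m` and `y` has index `2m`. -/
theorem stmt15 (α β γ δ : ℝ) (x y : ℕ → ℝ) (h : IsAsyncSol 2 3 α β γ δ x y) :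
    ∀ m : ℕ,
      ![x (3 * (m + 1)), y (2 * (m + 1))] =
        (!![(2*α+1)^3 + 6*β*γ, (2*α+1) * (2*(2*α+1)*β + 2*β) + 2*β*(3*δ+1);
            3*(2*α+1)*γ + 3*(3*δ+1)*γ, (3*δ+1)^2 + 6*β*γ]).mulVec
          ![x (3 * m), y (2 * m)] := by
  obtain ⟨hx, hy⟩ := h
  intro m
  have fx : ∀ n : ℕ, ⌊(n : ℝ) * 2 / 3⌋₊ = n * 2 / 3 := fun n => by
    have := floor_aux_s15 2 3 n; simpa using this
  have fy : ∀ n : ℕ, ⌊(n : ℝ) * 3 / 2⌋₊ = n * 3 / 2 := fun n => by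
    have := floor_aux_s15 3 2 n; simpa using this
  have e1 := hx (3 * m)
  have e2 := hx (3 * m + 1)
  have e3 := hx (3 * m + 2)
  have f1 := hy (2 * m)
  have f2 := hy (2 * m + 1)
  rw [fx, show (3 * m) * 2 / 3 = 2 * m by omega] at e1
  rw [fx, show (3 * m + 1) * 2 / 3 = 2 * m by omega] at e2
  rw [fx, show (3 * m + 2) * 2 / 3 = 2 * m + 1 by omega] at e3
  rw [fy, show (2 * m) * 3 / 2 = 3 * m by omega] at f1
  rw [fy, show (2 * m + 1) * 3 / 2 = 3 * m + 1 by omega] at f2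
  funext i
  fin_cases i <;>
    simp [Matrix.mulVec, dotProduct, show 3 * (m + 1) = (3 * m + 2) + 1 by ring,
      show 2 * (m + 1) = (2 * m + 1) + 1 by ring, e3, f2, e2, f1, e1] <;> ring
end

section
/- Let r := (29/80)^{1/6} (the positive real sixth root) and set α̂ = -17/60, β̂ = 1/60, γ̂ = -(9/16)/(Σ_{i=0}^{5} r^i), δ̂ = r - 1. Then the six-step matrix of the (6,1)-asynchronous system with parameters (α̂, β̂, γ̂, δ̂), namely the matrix with rows (1+6α̂, 6β̂) and (γ̂·Σ_{i=0}^{5}(1+δ̂)^i, (1+δ̂)^6), equals the matrix with rows (-7/10, 1/10) and (-9/16, 29/80); hence this (6,1)-system is dynamically equivalent (same T = 6 step solution operator) to the (2,3)-asynchronous system with parameters α = -1, β = 1/5, γ = 1/4, δ = -1/4. -/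
/-- With `r = (29/80)^{1/6}` and `α̂ = -17/60`, `β̂ = 1/60`, `γ̂ = -(9/16)/Σ_{i<6} rⁱ`,
`δ̂ = r - 1`, the six-step matrix of the `(6,1)`-asynchronous system equals the matrix
with rows `(-7/10, 1/10)` and `(-9/16, 29/80)`, which is also the six-step solution
operator of the `(2,3)`-system with `α = -1`, `β = 1/5`, `γ = 1/4`, `δ = -1/4`:
the two systems are dynamically equivalent. -/
theorem stmt17 :
    let r : ℝ := (29/80 : ℝ) ^ ((1 : ℝ)/6)
    let αh : ℝ := -17/60
    let βh : ℝ := 1/60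
    let γh : ℝ := -(9/16) / (∑ i ∈ Finset.range 6, r ^ i)
    let δh : ℝ := r - 1
    (!![1 + 6 * αh, 6 * βh;
        γh * ∑ i ∈ Finset.range 6, (1 + δh) ^ i, (1 + δh) ^ 6] =
      !![(-7 : ℝ)/10, 1/10; -9/16, 29/80]) ∧
    (!![(2*(-1 : ℝ)+1)^3 + 6*(1/5)*(1/4),
          (2*(-1 : ℝ)+1) * (2*(2*(-1 : ℝ)+1)*(1/5) + 2*(1/5)) + 2*(1/5)*(3*(-1/4 : ℝ)+1);
        3*(2*(-1 : ℝ)+1)*(1/4) + 3*(3*(-1/4 : ℝ)+1)*(1/4),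
          (3*(-1/4 : ℝ)+1)^2 + 6*(1/5)*(1/4)] =
      !![(-7 : ℝ)/10, 1/10; -9/16, 29/80]) := by
  intro r αh βh γh δh
  have hr0 : (0:ℝ) < r := Real.rpow_pos_of_pos (by norm_num) _
  have hr6 : r ^ 6 = 29/80 := by
    rw [show r ^ 6 = r ^ ((6:ℕ):ℝ) from (Real.rpow_natCast r 6).symm,
      show r = (29/80:ℝ) ^ ((1:ℝ)/6) from rfl, ← Real.rpow_mul (by norm_num)]
    norm_num
  have hsum : (∑ i ∈ Finset.range 6, r ^ i) > 0 :=
    Finset.sum_pos (fun i _ => pow_pos hr0 i) ⟨0, by norm_num⟩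
  have h1δ : 1 + δh = r := by simp [δh]
  constructor
  · ext i j
    have hγ : γh * ∑ i ∈ Finset.range 6, r ^ i = -(9/16) :=
      div_mul_cancel₀ _ hsum.ne'
    fin_cases i <;> fin_cases j <;>
      simp [αh, βh, h1δ, hγ, hr6, Matrix.cons_val_zero, Matrix.cons_val_one] <;>
      norm_num
  · ext i j
    fin_cases i <;> fin_cases j <;> norm_num
end
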